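/- Let A ∈ ℝ^{d×d} and let Q, W, Σ₀ ∈ ℝ^{d×d} be symmetric positive semidefinite. Suppose t ↦ exp(tA) W exp(tAᵀ) is integrable on [0, ∞) (entrywise) and t ↦ ‖exp(tA)‖₂² is integrable on [0, ∞). Define X := ∫₀^∞ exp(tA) W exp(tAᵀ) dt and, for τ ≥ 0, V(τ) := exp(τA) Σ₀ exp(τAᵀ) + ∫₀^τ exp(tA) W exp(tAᵀ) dt. Then |tr(Q V(τ)) − tr(Q X)| ≤ λ_max(Q) ( tr(Σ₀) ‖exp(τA)‖₂² + tr(W) ∫_τ^∞ ‖exp(tA)‖₂² dt ), where λ_max(Q) is the largest eigenvalue of Q and ‖·‖₂ is the spectral norm. -/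

import Mathlib

open Matrix MeasureTheory

/-- Euclidean norm of a vector. -/
noncomputable def vnorm {ι : Type*} [Fintype ι] (v : ι → ℝ) : ℝ :=
  Real.sqrt (∑ i, v i ^ 2)

/-- Spectral (ℓ²-operator) norm of a real matrix. -/
noncomputable def matSpectralNorm {ι κ : Type*} [Fintype ι] [Fintype κ]
    (M : Matrix ι κ ℝ) : ℝ :=
  ⨆ v : {v : κ → ℝ // vnorm v ≤ 1}, vnorm (M.mulVec v.1)

/-- Largest eigenvalue of a symmetric matrix, as the supremum of the Rayleigh
quotient over unit vectors. -/
noncomputable def lambdaMax {ι : Type*} [Fintype ι] (S : Matrix ι ι ℝ) : ℝ :=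
  ⨆ v : {v : ι → ℝ // vnorm v = 1}, v.1 ⬝ᵥ S.mulVec v.1

section aux

variable {ι κ : Type*} [Fintype ι] [Fintype κ]

lemma vnorm_nonneg (v : ι → ℝ) : 0 ≤ vnorm v := Real.sqrt_nonneg _

lemma vnorm_def (v : ι → ℝ) : vnorm v = Real.sqrt (∑ i, v i ^ 2) := rfl

lemma vnorm_sq (v : ι → ℝ) : vnorm v ^ 2 = ∑ i, v i ^ 2 := by
  rw [vnorm, Real.sq_sqrt]; positivity

lemma vnorm_smul (c : ℝ) (v : ι → ℝ) : vnorm (c • v) = |c| * vnorm v := by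
  simp only [vnorm, Pi.smul_apply, smul_eq_mul, mul_pow, ← Finset.mul_sum,
    Real.sqrt_mul (sq_nonneg c), Real.sqrt_sq_eq_abs]

lemma vnorm_eq_zero {v : ι → ℝ} (h : vnorm v = 0) : v = 0 := by
  have h2 : (∑ i, v i ^ 2) = 0 := by
    rw [← vnorm_sq v, h]; norm_num
  funext i
  have := (Finset.sum_eq_zero_iff_of_nonneg (fun i _ => sq_nonneg (v i))).1 h2 i
    (Finset.mem_univ i)
  exact pow_eq_zero_iff (n := 2) (by norm_num) |>.1 this

lemma abs_le_one_of_vnorm_le_one {v : ι → ℝ} (h : vnorm v ≤ 1) (i : ι) : |v i| ≤ 1 := by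
  rw [← sq_le_one_iff_abs_le_one]
  calc v i ^ 2 ≤ ∑ j, v j ^ 2 :=
        Finset.single_le_sum (fun j _ => sq_nonneg (v j)) (Finset.mem_univ i)
    _ = vnorm v ^ 2 := (vnorm_sq v).symm
    _ ≤ 1 := by nlinarith [vnorm_nonneg v]

lemma matSpectralNorm_bddAbove (M : Matrix ι κ ℝ) :
    BddAbove (Set.range fun v : {v : κ → ℝ // vnorm v ≤ 1} => vnorm (M.mulVec v.1)) := by
  refine ⟨Real.sqrt (∑ i, (∑ j, |M i j|) ^ 2), ?_⟩
  rintro x ⟨v, rfl⟩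
  dsimp only
  rw [vnorm_def]
  apply Real.sqrt_le_sqrt
  apply Finset.sum_le_sum
  intro i _
  have h1 : |M.mulVec v.1 i| ≤ ∑ j, |M i j| := by
    calc |M.mulVec v.1 i| = |∑ j, M i j * v.1 j| := by simp [Matrix.mulVec, dotProduct]
      _ ≤ ∑ j, |M i j * v.1 j| := Finset.abs_sum_le_sum_abs _ _
      _ ≤ ∑ j, |M i j| := by
          apply Finset.sum_le_sum
          intro j _
          rw [abs_mul]
          calc |M i j| * |v.1 j| ≤ |M i j| * 1 :=
                mul_le_mul_of_nonneg_left (abs_le_one_of_vnorm_le_one v.2 j) (abs_nonneg _)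
            _ = |M i j| := mul_one _
  calc M.mulVec v.1 i ^ 2 = |M.mulVec v.1 i| ^ 2 := (sq_abs _).symm
    _ ≤ (∑ j, |M i j|) ^ 2 := by
        apply pow_le_pow_left₀ (abs_nonneg _) h1

lemma matSpectralNorm_nonneg (M : Matrix ι κ ℝ) : 0 ≤ matSpectralNorm M :=
  Real.iSup_nonneg fun v => vnorm_nonneg _

lemma vnorm_mulVec_le (M : Matrix ι κ ℝ) (v : κ → ℝ) :
    vnorm (M.mulVec v) ≤ matSpectralNorm M * vnorm v := by
  rcases eq_or_lt_of_le (vnorm_nonneg v) with h0 | h0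
  · have hv0 : v = 0 := vnorm_eq_zero h0.symm
    have hz : vnorm ((0 : κ → ℝ)) = 0 := by simp [vnorm_def]
    have hz2 : vnorm ((0 : ι → ℝ)) = 0 := by simp [vnorm_def]
    simp [hv0, Matrix.mulVec_zero, hz, hz2]
  · set c : ℝ := (vnorm v)⁻¹ with hc
    have hcpos : 0 < c := inv_pos.2 h0
    have hu : vnorm (c • v) = 1 := by
      rw [vnorm_smul, abs_of_pos hcpos, hc, inv_mul_cancel₀ (ne_of_gt h0)]
    have hle : vnorm (M.mulVec (c • v)) ≤ matSpectralNorm M :=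
      le_ciSup (matSpectralNorm_bddAbove M) (⟨c • v, le_of_eq hu⟩ : {v : κ → ℝ // vnorm v ≤ 1})
    rw [Matrix.mulVec_smul, vnorm_smul, abs_of_pos hcpos] at hle
    have := mul_le_mul_of_nonneg_left hle (le_of_lt h0)
    rw [← mul_assoc, mul_inv_cancel₀ (ne_of_gt h0), one_mul] at this
    linarith [this]

lemma rayleigh_bddAbove (Q : Matrix ι ι ℝ) :
    BddAbove (Set.range fun v : {v : ι → ℝ // vnorm v = 1} => v.1 ⬝ᵥ Q.mulVec v.1) := by
  refine ⟨∑ i, ∑ j, |Q i j|, ?_⟩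
  rintro x ⟨v, rfl⟩
  have hv : ∀ i, |v.1 i| ≤ 1 := abs_le_one_of_vnorm_le_one (le_of_eq v.2)
  calc v.1 ⬝ᵥ Q.mulVec v.1 ≤ |v.1 ⬝ᵥ Q.mulVec v.1| := le_abs_self _
    _ = |∑ i, ∑ j, v.1 i * (Q i j * v.1 j)| := by
        simp [dotProduct, Matrix.mulVec, Finset.mul_sum]
    _ ≤ ∑ i, ∑ j, |v.1 i * (Q i j * v.1 j)| := by
        refine (Finset.abs_sum_le_sum_abs _ _).trans (Finset.sum_le_sum fun i _ =>
          Finset.abs_sum_le_sum_abs _ _)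
    _ ≤ ∑ i, ∑ j, |Q i j| := by
        apply Finset.sum_le_sum; intro i _
        apply Finset.sum_le_sum; intro j _
        rw [abs_mul, abs_mul]
        calc |v.1 i| * (|Q i j| * |v.1 j|) ≤ 1 * (|Q i j| * 1) := by
              apply mul_le_mul (hv i) ?_ (by positivity) zero_le_one
              exact mul_le_mul_of_nonneg_left (hv j) (abs_nonneg _)
          _ = |Q i j| := by ring

lemma rayleigh_le_lambdaMax (Q : Matrix ι ι ℝ) (v : ι → ℝ) :
    v ⬝ᵥ Q.mulVec v ≤ lambdaMax Q * vnorm v ^ 2 := by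
  rcases eq_or_lt_of_le (vnorm_nonneg v) with h0 | h0
  · have hv0 : v = 0 := vnorm_eq_zero h0.symm
    have hz : vnorm ((0 : ι → ℝ)) = 0 := by simp [vnorm_def]
    simp [hv0, hz, Matrix.mulVec_zero]
  · set c : ℝ := (vnorm v)⁻¹ with hc
    have hcpos : 0 < c := inv_pos.2 h0
    have hu : vnorm (c • v) = 1 := by
      rw [vnorm_smul, abs_of_pos hcpos, hc, inv_mul_cancel₀ (ne_of_gt h0)]
    have hle : (c • v) ⬝ᵥ Q.mulVec (c • v) ≤ lambdaMax Q :=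
      le_ciSup (rayleigh_bddAbove Q) (⟨c • v, hu⟩ : {v : ι → ℝ // vnorm v = 1})
    rw [Matrix.mulVec_smul, dotProduct_smul, smul_dotProduct, smul_eq_mul, smul_eq_mul] at hle
    have hne : vnorm v ≠ 0 := ne_of_gt h0
    have h2 : c * (c * (v ⬝ᵥ Q.mulVec v)) * vnorm v ^ 2 = v ⬝ᵥ Q.mulVec v := by
      rw [hc]; field_simp
    have h3 := mul_le_mul_of_nonneg_right hle (sq_nonneg (vnorm v))
    rwa [h2] at h3

lemma lambdaMax_nonneg {Q : Matrix ι ι ℝ} (hQ : Q.PosSemidef) : 0 ≤ lambdaMax Q :=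
  Real.iSup_nonneg fun v => by simpa using hQ.dotProduct_mulVec_nonneg v.1

lemma dot_nonneg {Q : Matrix ι ι ℝ} (hQ : Q.PosSemidef) (v : ι → ℝ) :
    0 ≤ v ⬝ᵥ Q.mulVec v := by simpa using hQ.dotProduct_mulVec_nonneg v

end aux

section trace

variable {ι : Type*} [Fintype ι] [DecidableEq ι]

lemma transpose_eq_of_posSemidef {S : Matrix ι ι ℝ} (hS : S.PosSemidef) : Sᵀ = S := by
  have := hS.isHermitian
  rwa [Matrix.IsHermitian, Matrix.conjTranspose_eq_transpose_of_trivial] at this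

lemma diag_mul_mul_transpose (S Q : Matrix ι ι ℝ) (i : ι) :
    (S * Q * Sᵀ) i i = (S i) ⬝ᵥ Q.mulVec (S i) := by
  simp only [Matrix.mul_apply, Matrix.transpose_apply, dotProduct, Matrix.mulVec,
    Finset.sum_mul, Finset.mul_sum]
  rw [Finset.sum_comm]
  exact Finset.sum_congr rfl fun j _ => Finset.sum_congr rfl fun k _ => by ring

lemma trace_transpose_mul_self (B : Matrix ι ι ℝ) :
    (Bᵀ * B).trace = ∑ i, vnorm (fun j => B j i) ^ 2 := by
  simp only [Matrix.trace, Matrix.diag, Matrix.mul_apply, Matrix.transpose_apply, vnorm_sq]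
  exact Finset.sum_congr rfl fun i _ => Finset.sum_congr rfl fun j _ => (pow_two (B j i)).symm

lemma trace_mul_psd_bounds {Q M : Matrix ι ι ℝ} (hQ : Q.PosSemidef) (hM : M.PosSemidef) :
    0 ≤ (Q * M).trace ∧ (Q * M).trace ≤ lambdaMax Q * M.trace := by
  obtain ⟨S, hSps, hSS⟩ : ∃ S : Matrix ι ι ℝ, S.PosSemidef ∧ S * S = M :=
    by open scoped MatrixOrder in exact ⟨CFC.sqrt M, Matrix.nonneg_iff_posSemidef.1 (CFC.sqrt_nonneg M), CFC.sqrt_mul_sqrt_self M (Matrix.nonneg_iff_posSemidef.2 hM)⟩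
  have hS : Sᵀ = S := transpose_eq_of_posSemidef hSps
  have hcolS : ∀ i : ι, (fun j => S j i) = S i := by
    intro i; funext j
    conv_lhs => rw [← hS]
    simp
  have key : (Q * M).trace = ∑ i, (S i) ⬝ᵥ Q.mulVec (S i) := by
    rw [← hSS, ← Matrix.mul_assoc, Matrix.trace_mul_comm, ← Matrix.mul_assoc]
    rw [show S * Q * S = S * Q * Sᵀ by rw [hS]]
    simp only [Matrix.trace, Matrix.diag]
    exact Finset.sum_congr rfl fun i _ => diag_mul_mul_transpose S Q i
  have htr : M.trace = ∑ i, vnorm (S i) ^ 2 := by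
    rw [← hSS, show S * S = Sᵀ * S by rw [hS], trace_transpose_mul_self]
    exact Finset.sum_congr rfl fun i _ => by rw [hcolS i]
  constructor
  · rw [key]
    exact Finset.sum_nonneg fun i _ => dot_nonneg hQ _
  · rw [key, htr, Finset.mul_sum]
    exact Finset.sum_le_sum fun i _ => rayleigh_le_lambdaMax Q (S i)

lemma trace_conj_le {Sg : Matrix ι ι ℝ} (hSg : Sg.PosSemidef) (E : Matrix ι ι ℝ) :
    (E * Sg * Eᵀ).trace ≤ matSpectralNorm E ^ 2 * Sg.trace := by
  obtain ⟨S, hSps, hSS⟩ : ∃ S : Matrix ι ι ℝ, S.PosSemidef ∧ S * S = Sg :=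
    by open scoped MatrixOrder in exact ⟨CFC.sqrt Sg, Matrix.nonneg_iff_posSemidef.1 (CFC.sqrt_nonneg Sg), CFC.sqrt_mul_sqrt_self Sg (Matrix.nonneg_iff_posSemidef.2 hSg)⟩
  have hS : Sᵀ = S := transpose_eq_of_posSemidef hSps
  have hcolS : ∀ i : ι, (fun j => S j i) = S i := by
    intro i; funext j
    conv_lhs => rw [← hS]
    simp
  have hB : E * Sg * Eᵀ = (E * S) * (E * S)ᵀ := by
    rw [Matrix.transpose_mul, hS, ← hSS]
    noncomm_ring
  have htr : (E * Sg * Eᵀ).trace = ∑ i, vnorm (fun j => (E * S) j i) ^ 2 := by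
    rw [hB, Matrix.trace_mul_comm, trace_transpose_mul_self]
  have hcol : ∀ i, (fun j => (E * S) j i) = E.mulVec (S i) := by
    intro i
    funext j
    simp only [Matrix.mul_apply, Matrix.mulVec, dotProduct]
    exact Finset.sum_congr rfl fun k _ => by rw [show S k i = S i k from congrFun (hcolS i) k]
  have htrSg : Sg.trace = ∑ i, vnorm (S i) ^ 2 := by
    rw [← hSS, show S * S = Sᵀ * S by rw [hS], trace_transpose_mul_self]
    exact Finset.sum_congr rfl fun i _ => by rw [hcolS i]
  rw [htr, htrSg, Finset.mul_sum]
  refine Finset.sum_le_sum fun i _ => ?_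
  rw [hcol i]
  calc vnorm (E.mulVec (S i)) ^ 2 ≤ (matSpectralNorm E * vnorm (S i)) ^ 2 :=
        pow_le_pow_left₀ (vnorm_nonneg _) (vnorm_mulVec_le E (S i)) 2
    _ = matSpectralNorm E ^ 2 * vnorm (S i) ^ 2 := by ring

end trace
section integralLemmas

lemma trace_mul_eq {ι : Type*} [Fintype ι] (Q N : Matrix ι ι ℝ) :
    (Q * N).trace = ∑ p : ι × ι, Q p.1 p.2 * N p.2 p.1 := by
  rw [Fintype.sum_prod_type]
  simp [Matrix.trace, Matrix.diag, Matrix.mul_apply]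

lemma integrableOn_trace_mul {d : ℕ} (Q : Matrix (Fin d) (Fin d) ℝ)
    (f : ℝ → Matrix (Fin d) (Fin d) ℝ) (s : Set ℝ)
    (hint : ∀ i j, IntegrableOn (fun t => f t i j) s) :
    IntegrableOn (fun t => (Q * f t).trace) s := by
  have h : (fun t => (Q * f t).trace)
      = fun t => ∑ p : Fin d × Fin d, Q p.1 p.2 * f t p.2 p.1 :=
    funext fun t => trace_mul_eq _ _
  rw [h]
  exact MeasureTheory.integrable_finset_sum _ fun p _ => (hint p.2 p.1).const_mul _

lemma trace_mul_setIntegral {d : ℕ} (Q : Matrix (Fin d) (Fin d) ℝ)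
    (f : ℝ → Matrix (Fin d) (Fin d) ℝ) (s : Set ℝ)
    (hint : ∀ i j, IntegrableOn (fun t => f t i j) s) :
    (Q * Matrix.of fun i j => ∫ t in s, f t i j).trace
      = ∫ t in s, (Q * f t).trace := by
  simp only [trace_mul_eq, Matrix.of_apply]
  rw [MeasureTheory.integral_finset_sum _
    (fun p _ => (hint p.2 p.1).const_mul (Q p.1 p.2))]
  exact Finset.sum_congr rfl fun p _ => (MeasureTheory.integral_const_mul _ _).symm

lemma trace_mul_intervalIntegral {d : ℕ} (Q : Matrix (Fin d) (Fin d) ℝ)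
    (f : ℝ → Matrix (Fin d) (Fin d) ℝ) (a b : ℝ)
    (hint : ∀ i j, IntervalIntegrable (fun t => f t i j) MeasureTheory.volume a b) :
    (Q * Matrix.of fun i j => ∫ t in a..b, f t i j).trace
      = ∫ t in a..b, (Q * f t).trace := by
  have h1 : (∫ t in a..b, (Q * f t).trace)
      = ∑ p : Fin d × Fin d, ∫ t in a..b, Q p.1 p.2 * f t p.2 p.1 := by
    simp only [trace_mul_eq]
    exact intervalIntegral.integral_finset_sum
      (fun p _ => (hint p.2 p.1).const_mul (Q p.1 p.2))
  rw [h1, trace_mul_eq]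
  refine Finset.sum_congr rfl fun p _ => ?_
  rw [Matrix.of_apply, ← intervalIntegral.integral_const_mul]

end integralLemmas

/-- **truncation error of the quadratic cost.**
With `X = ∫₀^∞ e^{tA} W e^{tAᵀ} dt` and
`V(τ) = e^{τA} Sig₀ e^{τAᵀ} + ∫₀^τ e^{tA} W e^{tAᵀ} dt`, one has
`|tr(Q V(τ)) − tr(Q X)| ≤ λ_max(Q)(tr(Sig₀)‖e^{τA}‖₂² + tr(W) ∫_τ^∞ ‖e^{tA}‖₂² dt)`. -/
theorem cost_truncation_bound (d : ℕ)
    (A Q W Sig₀ : Matrix (Fin d) (Fin d) ℝ)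
    (hQ : Q.PosSemidef) (hW : W.PosSemidef) (hSig₀ : Sig₀.PosSemidef)
    (hint1 : ∀ i j, IntegrableOn
      (fun t : ℝ =>
        (NormedSpace.exp (t • A) * W * NormedSpace.exp (t • Aᵀ)) i j)
      (Set.Ici 0))
    (hint2 : IntegrableOn
      (fun t : ℝ => matSpectralNorm (NormedSpace.exp (t • A)) ^ 2) (Set.Ici 0))
    (X : Matrix (Fin d) (Fin d) ℝ)
    (hX : X = Matrix.of fun i j => ∫ t in Set.Ici (0 : ℝ),
      (NormedSpace.exp (t • A) * W * NormedSpace.exp (t • Aᵀ)) i j)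
    (V : ℝ → Matrix (Fin d) (Fin d) ℝ)
    (hV : ∀ τ : ℝ, V τ =
      NormedSpace.exp (τ • A) * Sig₀ * NormedSpace.exp (τ • Aᵀ) +
        Matrix.of fun i j => ∫ t in (0 : ℝ)..τ,
          (NormedSpace.exp (t • A) * W * NormedSpace.exp (t • Aᵀ)) i j) :
    ∀ τ : ℝ, 0 ≤ τ →
      |(Q * V τ).trace - (Q * X).trace| ≤
        lambdaMax Q *
          (Sig₀.trace * matSpectralNorm (NormedSpace.exp (τ • A)) ^ 2 +
            W.trace *
              ∫ t in Set.Ioi τ, matSpectralNorm (NormedSpace.exp (t • A)) ^ 2) := by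
  intro τ hτ
  have hET : ∀ t : ℝ,
      NormedSpace.exp (t • Aᵀ) = (NormedSpace.exp (t • A))ᵀ := fun t => by
    rw [← Matrix.transpose_smul, Matrix.exp_transpose]
  have hpsd : ∀ (M : Matrix (Fin d) (Fin d) ℝ), M.PosSemidef → ∀ t : ℝ,
      (NormedSpace.exp (t • A) * M * NormedSpace.exp (t • Aᵀ)).PosSemidef := by
    intro M hM t
    rw [hET t]
    have h := hM.mul_mul_conjTranspose_same (NormedSpace.exp (t • A))
    rwa [Matrix.conjTranspose_eq_transpose_of_trivial] at h
  have hlam : 0 ≤ lambdaMax Q := lambdaMax_nonneg hQ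
  -- pointwise bounds on g t := (Q * f t).trace
  have hg_nonneg : ∀ t : ℝ, 0 ≤
      (Q * (NormedSpace.exp (t • A) * W * NormedSpace.exp (t • Aᵀ))).trace :=
    fun t => (trace_mul_psd_bounds hQ (hpsd W hW t)).1
  have hg_le : ∀ t : ℝ,
      (Q * (NormedSpace.exp (t • A) * W * NormedSpace.exp (t • Aᵀ))).trace ≤
        lambdaMax Q * (W.trace * matSpectralNorm (NormedSpace.exp (t • A)) ^ 2) := by
    intro t
    calc (Q * (NormedSpace.exp (t • A) * W * NormedSpace.exp (t • Aᵀ))).trace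
        ≤ lambdaMax Q *
            (NormedSpace.exp (t • A) * W * NormedSpace.exp (t • Aᵀ)).trace :=
          (trace_mul_psd_bounds hQ (hpsd W hW t)).2
      _ ≤ lambdaMax Q *
            (matSpectralNorm (NormedSpace.exp (t • A)) ^ 2 * W.trace) := by
          apply mul_le_mul_of_nonneg_left _ hlam
          rw [hET t]
          exact trace_conj_le hW _
      _ = lambdaMax Q * (W.trace * matSpectralNorm (NormedSpace.exp (t • A)) ^ 2) := by
          ring
  -- integrability
  have hsubIoc : Set.Ioc (0:ℝ) τ ⊆ Set.Ici 0 := fun x hx => le_of_lt hx.1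
  have hsubIoi : Set.Ioi τ ⊆ Set.Ici (0:ℝ) := fun x hx => le_trans hτ (le_of_lt hx)
  have hgIci : IntegrableOn
      (fun t : ℝ => (Q * (NormedSpace.exp (t • A) * W * NormedSpace.exp (t • Aᵀ))).trace)
      (Set.Ici (0:ℝ)) :=
    integrableOn_trace_mul Q _ _ hint1
  have hgIoi := hgIci.mono_set hsubIoi
  have hgIoc := hgIci.mono_set hsubIoc
  have hII : ∀ i j, IntervalIntegrable
      (fun t : ℝ => (NormedSpace.exp (t • A) * W * NormedSpace.exp (t • Aᵀ)) i j)
      MeasureTheory.volume 0 τ := by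
    intro i j
    rw [intervalIntegrable_iff_integrableOn_Ioc_of_le hτ]
    exact (hint1 i j).mono_set hsubIoc
  -- decompose the two traces
  have hVal : (Q * V τ).trace =
      (Q * (NormedSpace.exp (τ • A) * Sig₀ * NormedSpace.exp (τ • Aᵀ))).trace +
      ∫ t in (0:ℝ)..τ,
        (Q * (NormedSpace.exp (t • A) * W * NormedSpace.exp (t • Aᵀ))).trace := by
    rw [hV τ, Matrix.mul_add, Matrix.trace_add]
    congr 1
    exact trace_mul_intervalIntegral Q _ 0 τ hII
  have hXal : (Q * X).trace =
      (∫ t in (0:ℝ)..τ,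
        (Q * (NormedSpace.exp (t • A) * W * NormedSpace.exp (t • Aᵀ))).trace) +
      ∫ t in Set.Ioi τ,
        (Q * (NormedSpace.exp (t • A) * W * NormedSpace.exp (t • Aᵀ))).trace := by
    rw [hX, trace_mul_setIntegral Q _ _ hint1]
    rw [MeasureTheory.integral_Ici_eq_integral_Ioi, ← Set.Ioc_union_Ioi_eq_Ioi hτ,
      MeasureTheory.setIntegral_union (Set.Ioc_disjoint_Ioi le_rfl) measurableSet_Ioi
        hgIoc hgIoi, intervalIntegral.integral_of_le hτ]
  -- bounds on the boundary term and the tail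
  have ha0 : 0 ≤
      (Q * (NormedSpace.exp (τ • A) * Sig₀ * NormedSpace.exp (τ • Aᵀ))).trace :=
    (trace_mul_psd_bounds hQ (hpsd Sig₀ hSig₀ τ)).1
  have ha1 : (Q * (NormedSpace.exp (τ • A) * Sig₀ * NormedSpace.exp (τ • Aᵀ))).trace ≤
      lambdaMax Q * (Sig₀.trace * matSpectralNorm (NormedSpace.exp (τ • A)) ^ 2) := by
    calc (Q * (NormedSpace.exp (τ • A) * Sig₀ * NormedSpace.exp (τ • Aᵀ))).trace
        ≤ lambdaMax Q *
            (NormedSpace.exp (τ • A) * Sig₀ * NormedSpace.exp (τ • Aᵀ)).trace :=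
          (trace_mul_psd_bounds hQ (hpsd Sig₀ hSig₀ τ)).2
      _ ≤ lambdaMax Q *
            (matSpectralNorm (NormedSpace.exp (τ • A)) ^ 2 * Sig₀.trace) := by
          apply mul_le_mul_of_nonneg_left _ hlam
          rw [hET τ]
          exact trace_conj_le hSig₀ _
      _ = lambdaMax Q * (Sig₀.trace * matSpectralNorm (NormedSpace.exp (τ • A)) ^ 2) := by
          ring
  have hb0 : 0 ≤ ∫ t in Set.Ioi τ,
      (Q * (NormedSpace.exp (t • A) * W * NormedSpace.exp (t • Aᵀ))).trace :=
    MeasureTheory.setIntegral_nonneg measurableSet_Ioi fun t _ => hg_nonneg t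
  have hb1 : (∫ t in Set.Ioi τ,
      (Q * (NormedSpace.exp (t • A) * W * NormedSpace.exp (t • Aᵀ))).trace) ≤
      lambdaMax Q *
        (W.trace * ∫ t in Set.Ioi τ, matSpectralNorm (NormedSpace.exp (t • A)) ^ 2) := by
    have hint2' : IntegrableOn
        (fun t => lambdaMax Q *
          (W.trace * matSpectralNorm (NormedSpace.exp (t • A)) ^ 2)) (Set.Ioi τ) :=
      ((hint2.mono_set hsubIoi).const_mul W.trace).const_mul (lambdaMax Q)
    calc (∫ t in Set.Ioi τ,
          (Q * (NormedSpace.exp (t • A) * W * NormedSpace.exp (t • Aᵀ))).trace)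
        ≤ ∫ t in Set.Ioi τ, lambdaMax Q *
            (W.trace * matSpectralNorm (NormedSpace.exp (t • A)) ^ 2) :=
          MeasureTheory.setIntegral_mono_on hgIoi hint2' measurableSet_Ioi
            (fun t _ => hg_le t)
      _ = lambdaMax Q *
            (W.trace * ∫ t in Set.Ioi τ, matSpectralNorm (NormedSpace.exp (t • A)) ^ 2) := by
          rw [MeasureTheory.integral_const_mul, MeasureTheory.integral_const_mul]
  -- conclude
  rw [hVal, hXal, mul_add, abs_le]
  constructor <;> linarith
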